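/- Let K = (G, M, I) be a formal context with G finite and let R ⊆ G be arbitrary. Then there exists a complete representative system 𝒮 of R-mixed generators of K which has the semi-downset property: for every S ∈ 𝒮 and every T ⊆ R, the set S \ T belongs to 𝒮. -/

import Mathlib

/-- Derivation of a set of objects: the attributes shared by all of them. -/
def intentOf {G M : Type*} (I : G → M → Prop) (S : Set G) : Set M :=
  {n | ∀ g ∈ S, I g n}

/-- Derivation of a set of attributes: the objects having all of them. -/
def extentOf {G M : Type*} (I : G → M → Prop) (B : Set M) : Set G :=
  {g | ∀ n ∈ B, I g n}

/-- Double derivation (closure) of a set of objects. -/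
def cl {G M : Type*} (I : G → M → Prop) (S : Set G) : Set G :=
  extentOf I (intentOf I S)

/-- A set of objects is an extent if it is closed under double derivation. -/
def IsExtent {G M : Type*} (I : G → M → Prop) (S : Set G) : Prop :=
  cl I S = S

/-- The number of concepts of the context equals its number of extents. -/
noncomputable def numConcepts {G M : Type*} (I : G → M → Prop) : ℕ :=
  {S : Set G | IsExtent I S}.ncard

/-- The context op^{g,m}(K): fill the row of `g` except at `m`,
and fill the column of `m` except at `g`. -/
def opRel {G M : Type*} (I : G → M → Prop) (g : G) (m : M) : G → M → Prop :=
  fun h n => I h n ∨ (h = g ∧ n ≠ m) ∨ (h ≠ g ∧ n = m)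

/-- `S` is an `R`-mixed generator. -/
def MixGen {G M : Type*} (I : G → M → Prop) (R S : Set G) : Prop :=
  ∀ g : G, (g ∈ S ∩ R → cl I (S \ {g}) ≠ cl I S) ∧
    (g ∉ S ∪ R → cl I (S ∪ {g}) ≠ cl I S)

/-- `S` strongly avoids `h` (with respect to the attribute `m`):
`S' ∩ (hᶜ \ {m}) ≠ ∅`. -/
def StronglyAvoids {G M : Type*} (I : G → M → Prop) (m : M) (S : Set G) (h : G) : Prop :=
  ∃ n, n ∈ intentOf I S ∧ ¬ I h n ∧ n ≠ m

/-- `χ(S)`: the set of objects of `R = G \ m'` strongly avoided by `S`. -/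
def chi {G M : Type*} (I : G → M → Prop) (m : M) (S : Set G) : Set G :=
  {h | ¬ I h m ∧ StronglyAvoids I m S h}

section Aux

variable {G M : Type*} (I : G → M → Prop)

lemma subset_cl (S : Set G) : S ⊆ cl I S := fun g hg n hn => hn g hg

lemma cl_mono {S T : Set G} (h : S ⊆ T) : cl I S ⊆ cl I T :=
  fun g hg n hn => hg n (fun x hx => hn x (h hx))

lemma cl_cl (S : Set G) : cl I (cl I S) = cl I S :=
  Set.Subset.antisymm (fun g hg n hn => hg n (fun x hx => hx n hn)) (subset_cl I _)

lemma cl_diff_singleton {S : Set G} {g : G} (hg : g ∈ S) (h : g ∈ cl I (S \ {g})) :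
    cl I (S \ {g}) = cl I S := by
  refine Set.Subset.antisymm (cl_mono I Set.diff_subset) ?_
  have h1 : S ⊆ cl I (S \ {g}) := by
    intro x hx
    by_cases hxg : x = g
    · exact hxg ▸ h
    · exact subset_cl I _ ⟨hx, hxg⟩
  calc cl I S ⊆ cl I (cl I (S \ {g})) := cl_mono I h1
    _ = cl I (S \ {g}) := cl_cl I _

open Classical in
noncomputable def step (R A S : Set G) (g : G) : Set G :=
  if g ∈ R ∧ cl I (S \ {g}) = A then S \ {g} else S

lemma step_subset (R A S : Set G) (g : G) : step I R A S g ⊆ S := by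
  unfold step; split_ifs
  · exact Set.diff_subset
  · exact le_refl _

lemma diff_subset_step (R A S : Set G) (g : G) : S \ {g} ⊆ step I R A S g := by
  unfold step; split_ifs
  · exact le_refl _
  · exact Set.diff_subset

lemma step_pos {R A S : Set G} {g : G} (h : g ∈ R ∧ cl I (S \ {g}) = A) :
    step I R A S g = S \ {g} := by unfold step; exact if_pos h

lemma step_neg {R A S : Set G} {g : G} (h : ¬ (g ∈ R ∧ cl I (S \ {g}) = A)) :
    step I R A S g = S := by unfold step; exact if_neg h

lemma step_cl {R A S : Set G} (h : cl I S = A) (g : G) : cl I (step I R A S g) = A := by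
  unfold step; split_ifs with hc
  · exact hc.2
  · exact h

lemma fold_subset (R A : Set G) : ∀ (L : List G) (S : Set G),
    L.foldl (step I R A) S ⊆ S := by
  intro L
  induction L with
  | nil => intro S; exact le_refl _
  | cons a L ih =>
    intro S
    exact (ih (step I R A S a)).trans (step_subset I R A S a)

lemma fold_cl (R A : Set G) : ∀ (L : List G) (S : Set G), cl I S = A →
    cl I (L.foldl (step I R A) S) = A := by
  intro L
  induction L with
  | nil => intro S h; exact h
  | cons a L ih => intro S h; exact ih _ (step_cl I h a)

lemma diffR_subset_fold (R A : Set G) : ∀ (L : List G) (S : Set G),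
    S \ R ⊆ L.foldl (step I R A) S := by
  intro L
  induction L with
  | nil => intro S; exact Set.diff_subset
  | cons a L ih =>
    intro S
    have h1 : S \ R ⊆ step I R A S a \ R := by
      intro x hx
      refine ⟨?_, hx.2⟩
      unfold step; split_ifs with hc
      · exact ⟨hx.1, fun he => hx.2 (by rw [Set.mem_singleton_iff] at he; exact he ▸ hc.1)⟩
      · exact hx.1
    rw [List.foldl_cons]
    exact h1.trans (ih _)

lemma fold_keep (R A : Set G) : ∀ (L : List G) (S : Set G), cl I S = A → ∀ g, g ∈ L → g ∈ R →
    g ∈ L.foldl (step I R A) S → g ∉ cl I (L.foldl (step I R A) S \ {g}) := by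
  intro L
  induction L with
  | nil => intro S _ g hg; exact absurd hg List.not_mem_nil
  | cons a L ih =>
    intro S hS g hg hgR hgf
    rw [List.foldl_cons] at hgf ⊢
    rcases List.mem_cons.mp hg with hga | hgL
    · subst hga
      by_cases hc : g ∈ R ∧ cl I (S \ {g}) = A
      · exfalso
        rw [step_pos I hc] at hgf
        exact (fold_subset I R A L _ hgf).2 rfl
      · rw [step_neg I hc] at hgf ⊢
        have haS : g ∈ S := fold_subset I R A L S hgf
        have hne : cl I (S \ {g}) ≠ A := fun h => hc ⟨hgR, h⟩
        have hnotin : g ∉ cl I (S \ {g}) :=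
          fun h => hne ((cl_diff_singleton I haS h).trans hS)
        intro hmem
        exact hnotin (cl_mono I (Set.diff_subset_diff_left (fold_subset I R A L S)) hmem)
    · exact ih _ (step_cl I hS a) g hgL hgR hgf

lemma fold_parallel (R A U : Set G) : ∀ (L : List G) (V W : Set G),
    U ⊆ V → V ⊆ W → V ⊆ cl I U → V \ R ⊆ U → cl I W = A →
    U ⊆ L.foldl (step I R A) W →
    U ⊆ L.foldl (step I R (cl I U)) V ∧
      ∀ g ∈ L.foldl (step I R (cl I U)) V, g ∈ U ∨ g ∉ L := by
  intro L
  induction L with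
  | nil =>
    intro V W hUV _ _ _ _ _
    exact ⟨hUV, fun g _ => Or.inr List.not_mem_nil⟩
  | cons a L ih =>
    intro V W hUV hVW hVclU hVR hclW hUf
    rw [List.foldl_cons] at hUf ⊢
    have hUW' : a ∈ U → a ∈ step I R A W a := fun h => fold_subset I R A L _ (hUf h)
    have hclV : cl I V = cl I U := by
      apply Set.Subset.antisymm
      · calc cl I V ⊆ cl I (cl I U) := cl_mono I hVclU
          _ = cl I U := cl_cl I U
      · exact cl_mono I hUV
    have hremove : a ∈ V → a ∉ U → a ∈ R → step I R (cl I U) V a = V \ {a} := by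
      intro haV haU haR
      have h1 : cl I (V \ {a}) = cl I U := by
        apply Set.Subset.antisymm
        · calc cl I (V \ {a}) ⊆ cl I V := cl_mono I Set.diff_subset
            _ = cl I U := hclV
        · exact cl_mono I (fun x hx => ⟨hUV hx, fun he => haU (Set.mem_singleton_iff.mp he ▸ hx)⟩)
      exact step_pos I ⟨haR, h1⟩
    have hkeep : a ∈ U → step I R (cl I U) V a = V := by
      intro haU
      have haW' : a ∈ step I R A W a := hUW' haU
      have hWne : ¬ (a ∈ R ∧ cl I (W \ {a}) = A) := by
        intro hc
        rw [step_pos I hc] at haW'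
        exact haW'.2 rfl
      apply step_neg I
      rintro ⟨haR, hclVa⟩
      have haW : a ∈ W := hVW (hUV haU)
      have ha1 : a ∈ cl I (V \ {a}) := by rw [hclVa]; exact subset_cl I U haU
      have ha2 : a ∈ cl I (W \ {a}) :=
        cl_mono I (Set.diff_subset_diff_left hVW) ha1
      exact hWne ⟨haR, (cl_diff_singleton I haW ha2).trans hclW⟩
    have h7 : a ∈ step I R (cl I U) V a → a ∈ U := by
      intro haV'
      by_contra haU
      have haV : a ∈ V := step_subset I R (cl I U) V a haV'
      by_cases haR : a ∈ R
      · rw [hremove haV haU haR] at haV'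
        exact haV'.2 rfl
      · exact haU (hVR ⟨haV, haR⟩)
    have h1 : U ⊆ step I R (cl I U) V a := by
      intro x hx
      by_cases hxa : x = a
      · rw [hxa, hkeep (hxa ▸ hx)]
        exact hUV (hxa ▸ hx)
      · exact diff_subset_step I R (cl I U) V a ⟨hUV hx, hxa⟩
    have h2 : step I R (cl I U) V a ⊆ step I R A W a := by
      by_cases hWc : a ∈ R ∧ cl I (W \ {a}) = A
      · rw [step_pos I hWc]
        intro x hxV'
        refine ⟨hVW (step_subset I R (cl I U) V a hxV'), ?_⟩
        intro hxa
        have hxa' : x = a := hxa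
        have haU : a ∈ U := h7 (hxa' ▸ hxV')
        have hmem := hUW' haU
        rw [step_pos I hWc] at hmem
        exact hmem.2 rfl
      · rw [step_neg I hWc]
        exact (step_subset I R (cl I U) V a).trans hVW
    have h3 : step I R (cl I U) V a ⊆ cl I U := (step_subset I R (cl I U) V a).trans hVclU
    have h4 : step I R (cl I U) V a \ R ⊆ U :=
      fun x hx => hVR ⟨step_subset I R (cl I U) V a hx.1, hx.2⟩
    have h5 : cl I (step I R A W a) = A := step_cl I hclW a
    obtain ⟨c1, c2⟩ := ih _ _ h1 h2 h3 h4 h5 hUf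
    refine ⟨c1, ?_⟩
    intro g hg
    rcases c2 g hg with h | h
    · exact Or.inl h
    · by_cases hga : g = a
      · subst hga
        exact Or.inl (h7 (fold_subset I R (cl I U) L _ hg))
      · exact Or.inr (fun hmem => (List.mem_cons.mp hmem).elim hga h)

end Aux

theorem statement17 {G M : Type*} [Fintype G] (I : G → M → Prop) (R : Set G) :
    ∃ 𝒮 : Set (Set G),
      (∀ S ∈ 𝒮, MixGen I R S) ∧
      Set.InjOn (cl I) 𝒮 ∧
      (∀ A : Set G, IsExtent I A → ∃ S ∈ 𝒮, cl I S = A) ∧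
      (∀ S ∈ 𝒮, ∀ T ⊆ R, S \ T ∈ 𝒮) := by
  classical
  set L : List G := Finset.univ.toList with hL
  have hmemL : ∀ g : G, g ∈ L := fun g => Finset.mem_toList.mpr (Finset.mem_univ g)
  refine ⟨{S | ∃ A : Set G, IsExtent I A ∧ S = L.foldl (step I R A) A}, ?_, ?_, ?_, ?_⟩
  · rintro S ⟨A, hA, rfl⟩
    intro g
    constructor
    · rintro ⟨hgS, hgR⟩ heq
      have h1 := fold_keep I R A L A hA g (hmemL g) hgR hgS
      apply h1
      rw [heq]
      exact subset_cl I _ hgS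
    · intro hg heq
      have hgA : g ∈ A := by
        have h2 : cl I (L.foldl (step I R A) A) = A := fold_cl I R A L A hA
        rw [← h2, ← heq]
        exact subset_cl I _ (Set.mem_union_right _ rfl)
      rw [Set.mem_union] at hg
      push_neg at hg
      exact hg.1 (diffR_subset_fold I R A L A ⟨hgA, hg.2⟩)
  · rintro S₁ ⟨A₁, hA₁, rfl⟩ S₂ ⟨A₂, hA₂, rfl⟩ h
    have e1 := fold_cl I R A₁ L A₁ hA₁
    have e2 := fold_cl I R A₂ L A₂ hA₂
    rw [e1, e2] at h
    rw [h]
  · intro A hA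
    exact ⟨L.foldl (step I R A) A, ⟨A, hA, rfl⟩, fold_cl I R A L A hA⟩
  · rintro S ⟨A, hA, rfl⟩ T hTR
    set S₀ := L.foldl (step I R A) A with hS₀
    have hclS₀ : cl I S₀ = A := fold_cl I R A L A hA
    set U := S₀ \ T with hU
    have hUA : cl I U ⊆ A := by
      rw [← hclS₀]
      exact cl_mono I Set.diff_subset
    have hVR : cl I U \ R ⊆ U := by
      intro g hg
      have hgA : g ∈ A := hUA hg.1
      have hgS₀ : g ∈ S₀ := diffR_subset_fold I R A L A ⟨hgA, hg.2⟩
      exact ⟨hgS₀, fun hgT => hg.2 (hTR hgT)⟩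
    obtain ⟨c1, c2⟩ := fold_parallel I R A U L (cl I U) A (subset_cl I U) hUA
      (le_refl _) hVR hA (hU ▸ Set.diff_subset)
    refine ⟨cl I U, cl_cl I U, ?_⟩
    exact Set.Subset.antisymm c1
      (fun g hg => (c2 g hg).resolve_right (fun h => h (hmemL g))) |>.symm |>.symm
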